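/- Counterfactual stability of the Gumbel-Max SCM (conditional-measure form): let S be a finite nonempty type, let p and p' be strictly positive probability vectors on S, and let i, j ∈ S with j ≠ i satisfy p' i / p i ≥ p' j / p j. Let E_i = { g : S → ℝ | i is the strict argmax of (log ∘ p) + g }, which has μ_G^S(E_i) = p i > 0. Then the conditional measure of μ_G^S given E_i assigns probability 0 to the event { g | ∀ k ∈ S, log (p' j) + g j ≥ log (p' k) + g k }, i.e., conditioned on having observed outcome i under p, the counterfactual outcome under p' is almost surely not j. -/

import Mathlib

open MeasureTheory Real ProbabilityTheory

/-- The uniform probability measure on the open interval (0,1). -/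
noncomputable def uniform01 : Measure ℝ := volume.restrict (Set.Ioo (0 : ℝ) 1)

/-- The standard Gumbel distribution on ℝ: the pushforward of the uniform
measure on (0,1) under `u ↦ -log(-log u)`; its CDF is `x ↦ exp (-exp (-x))`. -/
noncomputable def stdGumbel : Measure ℝ :=
  uniform01.map (fun u : ℝ => -Real.log (-Real.log u))

/-- The product measure on `S → ℝ` with i.i.d. standard Gumbel coordinates. -/
noncomputable def gumbelPi (S : Type*) [Fintype S] : Measure (S → ℝ) :=
  Measure.pi (fun _ : S => stdGumbel)

lemma measurable_gumbelT : Measurable (fun u : ℝ => -Real.log (-Real.log u)) :=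
  (Real.measurable_log.comp Real.measurable_log.neg).neg

instance : IsProbabilityMeasure uniform01 := by
  constructor
  simp [uniform01, Real.volume_Ioo]

instance : IsProbabilityMeasure stdGumbel :=
  Measure.isProbabilityMeasure_map measurable_gumbelT.aemeasurable

lemma stdGumbel_Iio (b : ℝ) :
    stdGumbel (Set.Iio b) = ENNReal.ofReal (Real.exp (-Real.exp (-b))) := by
  rw [stdGumbel, Measure.map_apply measurable_gumbelT measurableSet_Iio]
  have hF1 : Real.exp (-Real.exp (-b)) < 1 := by
    rw [Real.exp_lt_one_iff]
    simpa using Real.exp_pos (-b)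
  have hF0 : 0 < Real.exp (-Real.exp (-b)) := Real.exp_pos _
  have : (fun u : ℝ => -Real.log (-Real.log u)) ⁻¹' Set.Iio b ∩ Set.Ioo 0 1
      = Set.Ioo 0 (Real.exp (-Real.exp (-b))) := by
    ext u
    simp only [Set.mem_inter_iff, Set.mem_preimage, Set.mem_Iio, Set.mem_Ioo]
    constructor
    · rintro ⟨h, hu0, hu1⟩
      refine ⟨hu0, ?_⟩
      have hlogu : Real.log u < 0 := Real.log_neg hu0 hu1
      have h1 : -b < Real.log (-Real.log u) := by linarith
      have h2 : Real.exp (-b) < -Real.log u :=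
        (Real.lt_log_iff_exp_lt (by linarith)).mp h1
      have h3 : Real.log u < -Real.exp (-b) := by linarith
      exact (Real.log_lt_iff_lt_exp hu0).mp h3
    · rintro ⟨hu0, huF⟩
      have hu1 : u < 1 := lt_trans huF hF1
      have hlogu : Real.log u < -Real.exp (-b) := (Real.log_lt_iff_lt_exp hu0).mpr huF
      have h2 : Real.exp (-b) < -Real.log u := by linarith
      have h1 : -b < Real.log (-Real.log u) :=
        (Real.lt_log_iff_exp_lt (by linarith [Real.exp_pos (-b)])).mpr h2
      exact ⟨by linarith, hu0, hu1⟩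
  rw [uniform01, Measure.restrict_apply (measurable_gumbelT measurableSet_Iio), this,
    Real.volume_Ioo]
  simp

lemma lintegral_stdGumbel (r : ℝ) (hr : 0 ≤ r) :
    ∫⁻ x, ENNReal.ofReal (Real.exp (-Real.exp (-x) * r)) ∂stdGumbel
      = ENNReal.ofReal (1 / (r + 1)) := by
  have hmeas : Measurable fun x : ℝ => ENNReal.ofReal (Real.exp (-Real.exp (-x) * r)) := by
    apply ENNReal.measurable_ofReal.comp
    exact (Real.continuous_exp.comp (((Real.continuous_exp.comp continuous_neg).neg).mul
      continuous_const)).measurable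
  rw [stdGumbel, lintegral_map hmeas measurable_gumbelT, uniform01]
  have hcongr : ∫⁻ u in Set.Ioo (0:ℝ) 1,
      ENNReal.ofReal (Real.exp (-Real.exp (-(-Real.log (-Real.log u))) * r))
      = ∫⁻ u in Set.Ioo (0:ℝ) 1, ENNReal.ofReal (u ^ r) := by
    apply setLIntegral_congr_fun measurableSet_Ioo
    intro u hu
    beta_reduce
    obtain ⟨hu0, hu1⟩ := hu
    have hlogu : Real.log u < 0 := Real.log_neg hu0 hu1
    rw [neg_neg, Real.exp_log (by linarith), Real.rpow_def_of_pos hu0]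
    ring_nf
  rw [hcongr]
  have hint : IntegrableOn (fun u : ℝ => u ^ r) (Set.Ioo 0 1) volume := by
    have := (intervalIntegral.intervalIntegrable_rpow (μ := volume) (r := r) (a := 0)
      (b := 1) (Or.inl hr)).1
    exact this.mono_set Set.Ioo_subset_Ioc_self
  rw [← ofReal_integral_eq_lintegral_ofReal hint]
  · have : ∫ u in Set.Ioo (0:ℝ) 1, u ^ r = 1 / (r + 1) := by
      rw [← integral_Ioc_eq_integral_Ioo, ← intervalIntegral.integral_of_le zero_le_one,
        integral_rpow (Or.inl (by linarith))]
      rw [Real.one_rpow, Real.zero_rpow (by linarith)]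
      ring
    rw [this]
  · filter_upwards [ae_restrict_mem measurableSet_Ioo] with u hu
    exact Real.rpow_nonneg hu.1.le r

lemma lintegral_eval_pi {ι : Type*} [Fintype ι] (μ : ι → Measure ℝ)
    [∀ k, IsProbabilityMeasure (μ k)] (j : ι) {f : ℝ → ENNReal} (hf : Measurable f) :
    ∫⁻ a, f (a j) ∂Measure.pi μ = ∫⁻ x, f x ∂(μ j) := by
  classical
  rw [← lintegral_map hf (measurable_pi_apply j)]
  congr 1
  refine Measure.ext fun s hs => ?_
  rw [Measure.map_apply (measurable_pi_apply j) hs]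
  have hpre : (fun a : ι → ℝ => a j) ⁻¹' s
      = Set.pi Set.univ (Function.update (fun _ => Set.univ) j s) := Set.eval_preimage
  rw [hpre, Measure.pi_pi]
  rw [Finset.prod_eq_single j (fun k _ hk => by simp [Function.update_of_ne hk])
    (fun h => absurd (Finset.mem_univ j) h)]
  simp

lemma gumbelPi_strict_argmax {S : Type*} [Fintype S] (p : S → ℝ)
    (hp : ∀ s, 0 < p s) (hpsum : ∑ s, p s = 1) (i : S) :
    gumbelPi S {g : S → ℝ | ∀ k : S, k ≠ i →
        Real.log (p k) + g k < Real.log (p i) + g i} = ENNReal.ofReal (p i) := by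
  classical
  set r : ℝ := ∑ k : {k : S // ¬ k = i}, p ↑k / p i with hr_def
  have hr0 : 0 ≤ r :=
    Finset.sum_nonneg fun k _ => div_nonneg (hp _).le (hp _).le
  have hrsum : r = (1 - p i) / p i := by
    rw [hr_def, ← Finset.sum_div]
    congr 1
    rw [← Finset.sum_subtype (Finset.univ.filter (fun k : S => ¬ k = i))
      (fun k => by simp) p]
    have h1 := Finset.sum_filter_add_sum_filter_not Finset.univ (fun k : S => ¬ k = i) p
    rw [hpsum] at h1
    have h2 : ∑ k ∈ Finset.univ.filter (fun k : S => ¬¬ k = i), p k = p i := by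
      rw [Finset.sum_filter]
      simp
    linarith
  set s : Set (({k : S // k = i} → ℝ) × ({k : S // ¬ k = i} → ℝ)) :=
    {z | ∀ k : {k : S // ¬ k = i},
      Real.log (p ↑k) + z.2 k < Real.log (p i) + z.1 ⟨i, rfl⟩} with hs_def
  have hs_meas : MeasurableSet s := by
    have : s = ⋂ k : {k : S // ¬ k = i},
        {z : ({k : S // k = i} → ℝ) × ({k : S // ¬ k = i} → ℝ) |
          Real.log (p ↑k) + z.2 k < Real.log (p i) + z.1 ⟨i, rfl⟩} := by
      ext z; simp [hs_def]
    rw [this]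
    refine MeasurableSet.iInter fun k => ?_
    exact measurableSet_lt (by fun_prop) (by fun_prop)
  have hmp := measurePreserving_piEquivPiSubtypeProd
    (fun _ : S => stdGumbel) (fun k : S => k = i)
  have hpre : {g : S → ℝ | ∀ k : S, k ≠ i →
      Real.log (p k) + g k < Real.log (p i) + g i}
      = (MeasurableEquiv.piEquivPiSubtypeProd (fun _ : S => ℝ) (fun k => k = i)) ⁻¹' s := by
    ext g
    simp only [Set.mem_preimage, Set.mem_setOf_eq, hs_def,
      MeasurableEquiv.piEquivPiSubtypeProd, Equiv.piEquivPiSubtypeProd,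
      MeasurableEquiv.coe_mk, Equiv.coe_fn_mk]
    constructor
    · intro h k; exact h ↑k k.2
    · intro h k hk; exact h ⟨k, hk⟩
  rw [gumbelPi, hpre, hmp.measure_preimage hs_meas.nullMeasurableSet,
    Measure.prod_apply hs_meas]
  have hinner : ∀ a : {k : S // k = i} → ℝ,
      (Measure.pi fun _ : {k : S // ¬ k = i} => stdGumbel) (Prod.mk a ⁻¹' s)
        = ENNReal.ofReal (Real.exp (-Real.exp (-(a ⟨i, rfl⟩)) * r)) := by
    intro a
    have hset : Prod.mk a ⁻¹' s = Set.pi Set.univ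
        (fun k : {k : S // ¬ k = i} =>
          Set.Iio (Real.log (p i) + a ⟨i, rfl⟩ - Real.log (p ↑k))) := by
      ext y
      simp only [Set.mem_preimage, hs_def, Set.mem_setOf_eq, Set.mem_pi, Set.mem_univ,
        Set.mem_Iio, forall_true_left]
      constructor
      · intro h k; have := h k; linarith
      · intro h k; have := h k; linarith
    rw [hset, Measure.pi_pi]
    have hterm : ∀ k : {k : S // ¬ k = i},
        stdGumbel (Set.Iio (Real.log (p i) + a ⟨i, rfl⟩ - Real.log (p ↑k)))
          = ENNReal.ofReal (Real.exp (-Real.exp (-(a ⟨i, rfl⟩)) * (p ↑k / p i))) := by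
      intro k
      rw [stdGumbel_Iio]
      congr 2
      rw [show -(Real.log (p i) + a ⟨i, rfl⟩ - Real.log (p ↑k))
        = -(a ⟨i, rfl⟩) + (Real.log (p ↑k) - Real.log (p i)) by ring]
      rw [Real.exp_add, Real.exp_sub, Real.exp_log (hp _), Real.exp_log (hp _)]
      ring
    simp_rw [hterm]
    rw [← ENNReal.ofReal_prod_of_nonneg (fun k _ => (Real.exp_pos _).le)]
    congr 1
    rw [← Real.exp_sum]
    congr 1
    rw [hr_def, Finset.mul_sum]
  have hmf : Measurable fun x : ℝ => ENNReal.ofReal (Real.exp (-Real.exp (-x) * r)) := by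
    apply ENNReal.measurable_ofReal.comp
    exact (Real.continuous_exp.comp (((Real.continuous_exp.comp continuous_neg).neg).mul
      continuous_const)).measurable
  rw [lintegral_congr hinner]
  have hofr : ENNReal.ofReal (p i) = ENNReal.ofReal (1 / (r + 1)) := by
    rw [hrsum]
    congr 1
    have := hp i
    field_simp
    ring
  rw [hofr, ← lintegral_stdGumbel r hr0]
  convert lintegral_eval_pi (fun _ : {k : S // k = i} => stdGumbel) ⟨i, rfl⟩ hmf using 2
  congr!

/-- Counterfactual stability of the Gumbel-Max SCM, conditional-measure form:
the event `E_i` that `i` is the strict argmax of `log ∘ p + g` has probability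
`p i > 0`, and conditionally on `E_i`, the counterfactual outcome under `p'`
(with the same noise) is almost surely not `j`, whenever `j ≠ i` and
`p' i / p i ≥ p' j / p j`. -/
theorem gumbelMax_cf_stability_cond {S : Type*} [Fintype S] [Nonempty S]
    (p p' : S → ℝ) (hp : ∀ s, 0 < p s) (hpsum : ∑ s, p s = 1)
    (hp' : ∀ s, 0 < p' s) (hp'sum : ∑ s, p' s = 1)
    (i j : S) (hij : j ≠ i) (hratio : p' i / p i ≥ p' j / p j) :
    gumbelPi S {g : S → ℝ | ∀ k : S, k ≠ i →
        Real.log (p k) + g k < Real.log (p i) + g i} = ENNReal.ofReal (p i)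
    ∧ 0 < ENNReal.ofReal (p i)
    ∧ (gumbelPi S)[|{g : S → ℝ | ∀ k : S, k ≠ i →
          Real.log (p k) + g k < Real.log (p i) + g i}]
        {g : S → ℝ | ∀ k : S, Real.log (p' k) + g k ≤ Real.log (p' j) + g j}
        = 0 := by
  classical
  refine ⟨gumbelPi_strict_argmax p hp hpsum i, ENNReal.ofReal_pos.mpr (hp i), ?_⟩
  set E : Set (S → ℝ) := {g : S → ℝ | ∀ k : S, k ≠ i →
    Real.log (p k) + g k < Real.log (p i) + g i} with hE_def
  have hE_meas : MeasurableSet E := by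
    have : E = ⋂ k : S, {g : S → ℝ | k ≠ i →
        Real.log (p k) + g k < Real.log (p i) + g i} := by
      ext g; simp [hE_def]
    rw [this]
    refine MeasurableSet.iInter fun k => ?_
    by_cases hk : k = i
    · simp [hk]
    · simp only [hk, ne_eq, not_false_iff, forall_true_left]
      exact measurableSet_lt (by fun_prop) (by fun_prop)
  rw [cond_apply hE_meas]
  have hempty : E ∩ {g : S → ℝ | ∀ k : S,
      Real.log (p' k) + g k ≤ Real.log (p' j) + g j} = ∅ := by
    ext g
    simp only [Set.mem_inter_iff, Set.mem_setOf_eq, Set.mem_empty_iff_false, iff_false,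
      not_and, hE_def]
    intro hE ht
    have h1 : Real.log (p j) + g j < Real.log (p i) + g i := hE j hij
    have h2 : Real.log (p' i) + g i ≤ Real.log (p' j) + g j := ht i
    have h3 : Real.log (p' j / p j) ≤ Real.log (p' i / p i) :=
      Real.log_le_log (div_pos (hp' j) (hp j)) hratio
    rw [Real.log_div (hp' j).ne' (hp j).ne', Real.log_div (hp' i).ne' (hp i).ne'] at h3
    linarith
  rw [hempty]
  simp
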